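/- Let λ > 0, p ≥ 3/2, and define h : ℝ³ → ℝ by h(x₁,x₂,x₃) := λ(x₁² + x₂²)^p + x₃. Let ω < −6λ and let x(t) := (sin(ωt)/ω, (1 − cos(ωt))/ω, (ωt − sin(ωt))/ω²) be the trajectory of Brockett's non-holonomic integrator under the control (cos ωt, sin ωt) starting at the origin. Then there exists t̄ > 0 such that h(x(t)) ≤ 0 for all t ∈ [0, t̄]. -/

import Mathlib

noncomputable section

/-- The first vector field of Brockett's non-holonomic integrator: `f₁(x) = (1, 0, −x₂)`. -/
def brockF₁ (p : ℝ × ℝ × ℝ) : ℝ × ℝ × ℝ := (1, 0, -p.2.1)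

/-- The second vector field of Brockett's non-holonomic integrator: `f₂(x) = (0, 1, x₁)`. -/
def brockF₂ (p : ℝ × ℝ × ℝ) : ℝ × ℝ × ℝ := (0, 1, p.1)

/-- The trajectory of Brockett's non-holonomic integrator starting at the origin under the
rotational control `(cos ωt, sin ωt)`. -/
def brockTraj (ω : ℝ) (t : ℝ) : ℝ × ℝ × ℝ :=
  (Real.sin (ω * t) / ω, (1 - Real.cos (ω * t)) / ω,
    (ω * t - Real.sin (ω * t)) / ω ^ 2)

/-- The constraint function `h(x) = λ(x₁² + x₂²)^p + x₃`. -/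
def brockCon (lam p : ℝ) (x : ℝ × ℝ × ℝ) : ℝ := lam * (x.1 ^ 2 + x.2.1 ^ 2) ^ p + x.2.2

lemma aux_nonneg_of_deriv (f f' : ℝ → ℝ) (h0 : f 0 = 0)
    (hd : ∀ x, HasDerivAt f (f' x) x) (hnn : ∀ x, 0 ≤ x → 0 ≤ f' x) :
    ∀ x, 0 ≤ x → 0 ≤ f x := by
  intro x hx
  have hmono : MonotoneOn f (Set.Ici 0) := by
    apply monotoneOn_of_deriv_nonneg (convex_Ici 0)
    · exact fun y _ => ((hd y).continuousAt).continuousWithinAt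
    · intro y hy
      exact (hd y).differentiableAt.differentiableWithinAt
    · intro y hy
      rw [(hd y).deriv]
      exact hnn y (le_of_lt (by simpa [interior_Ici] using hy))
  have := hmono (Set.self_mem_Ici) (Set.mem_Ici.mpr hx) hx
  rwa [h0] at this

lemma aux_sin_ge (x : ℝ) (hx : 0 ≤ x) : x - x ^ 3 / 6 ≤ Real.sin x := by
  have := aux_nonneg_of_deriv (fun x => Real.sin x - x + x ^ 3 / 6)
    (fun x => Real.cos x - 1 + x ^ 2 / 2) (by simp)
    (fun x => by
      have h := ((Real.hasDerivAt_sin x).sub (hasDerivAt_id x)).add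
        ((hasDerivAt_pow 3 x).div_const 6)
      refine h.congr_deriv ?_; push_cast; ring)
    (fun x _ => by nlinarith [Real.one_sub_sq_div_two_le_cos (x := x)])
  nlinarith [this x hx]

lemma aux_cos_le (x : ℝ) (hx : 0 ≤ x) : Real.cos x ≤ 1 - x ^ 2 / 2 + x ^ 4 / 24 := by
  have := aux_nonneg_of_deriv (fun x => 1 - x ^ 2 / 2 + x ^ 4 / 24 - Real.cos x)
    (fun x => -x + x ^ 3 / 6 + Real.sin x) (by simp)
    (fun x => by
      have h := (((hasDerivAt_const x (1:ℝ)).sub ((hasDerivAt_pow 2 x).div_const 2)).add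
        ((hasDerivAt_pow 4 x).div_const 24)).sub (Real.hasDerivAt_cos x)
      refine h.congr_deriv ?_; push_cast; ring)
    (fun x hx => by nlinarith [aux_sin_ge x hx])
  nlinarith [this x hx]

lemma aux_sub_sin (x : ℝ) (hx : 0 ≤ x) : x ^ 3 / 6 - x ^ 5 / 120 ≤ x - Real.sin x := by
  have := aux_nonneg_of_deriv (fun x => x - Real.sin x - x ^ 3 / 6 + x ^ 5 / 120)
    (fun x => 1 - Real.cos x - x ^ 2 / 2 + x ^ 4 / 24) (by simp)
    (fun x => by
      have h := (((hasDerivAt_id x).sub (Real.hasDerivAt_sin x)).sub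
        ((hasDerivAt_pow 3 x).div_const 6)).add ((hasDerivAt_pow 5 x).div_const 120)
      refine h.congr_deriv ?_; push_cast; ring)
    (fun x hx => by nlinarith [aux_cos_le x hx])
  nlinarith [this x hx]

theorem brockett_spiral_feasible' (lam p ω : ℝ) (hlam : 0 < lam)
    (hp : 3 / 2 ≤ p) (hω : ω < -6 * lam) :
    ∃ tbar > 0, ∀ t ∈ Set.Icc (0:ℝ) tbar,
      lam * ((Real.sin (ω*t)/ω) ^ 2 + ((1 - Real.cos (ω*t))/ω) ^ 2) ^ p
        + (ω*t - Real.sin (ω*t)) / ω ^ 2 ≤ 0 := by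
  obtain ⟨w, rfl⟩ : ∃ w, ω = -w := ⟨-ω, (neg_neg ω).symm⟩
  have hw0 : 0 < w := by nlinarith
  have hwne : w ≠ 0 := ne_of_gt hw0
  have hδ : 0 < w - 6 * lam := by nlinarith
  refine ⟨min 1 (Real.sqrt (20 * (w - 6 * lam) / w ^ 3)), ?_, ?_⟩
  · exact lt_min one_pos (Real.sqrt_pos.mpr (by positivity))
  intro t ht
  obtain ⟨ht0, ht1⟩ := ht
  rcases eq_or_lt_of_le ht0 with h0 | h0
  · rw [← h0]
    simp [Real.zero_rpow (show p ≠ 0 by positivity)]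
  have ht1' : t ≤ 1 := le_trans ht1 (min_le_left _ _)
  have htsq : t ^ 2 ≤ 20 * (w - 6 * lam) / w ^ 3 := by
    have h := le_trans ht1 (min_le_right _ _)
    have h2 := Real.sq_sqrt (show (0:ℝ) ≤ 20 * (w - 6 * lam) / w ^ 3 by positivity)
    nlinarith [Real.sqrt_nonneg (20 * (w - 6 * lam) / w ^ 3)]
  set u : ℝ := w * t with hu
  have hu0 : 0 ≤ u := by positivity
  have hωt : -w * t = -u := by rw [hu]; ring
  have hsin : Real.sin (-w * t) = -Real.sin u := by rw [hωt, Real.sin_neg]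
  have hcos : Real.cos (-w * t) = Real.cos u := by rw [hωt, Real.cos_neg]
  have hbase : (Real.sin (-w*t)/(-w)) ^ 2 + ((1 - Real.cos (-w*t))/(-w)) ^ 2
      = (2 - 2 * Real.cos u) / w ^ 2 := by
    rw [hsin, hcos]
    have hpyth := Real.sin_sq_add_cos_sq u
    field_simp
    nlinarith [hpyth]
  have hbase_nonneg : (0:ℝ) ≤ (2 - 2 * Real.cos u) / w ^ 2 :=
    div_nonneg (by nlinarith [Real.cos_le_one u]) (by positivity)
  have hbase_le : (2 - 2 * Real.cos u) / w ^ 2 ≤ t ^ 2 := by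
    have h1 := Real.one_sub_sq_div_two_le_cos (x := u)
    rw [div_le_iff₀ (by positivity)]
    nlinarith
  have hrpow : ((Real.sin (-w*t)/(-w)) ^ 2 + ((1 - Real.cos (-w*t))/(-w)) ^ 2) ^ p ≤ t ^ 3 := by
    rw [hbase]
    calc ((2 - 2 * Real.cos u) / w ^ 2) ^ p ≤ (t ^ 2) ^ p :=
          Real.rpow_le_rpow hbase_nonneg hbase_le (by linarith)
      _ = t ^ ((2:ℝ) * p) := by
          rw [← Real.rpow_natCast t 2, ← Real.rpow_mul ht0]; norm_num
      _ ≤ t ^ ((3:ℝ)) := Real.rpow_le_rpow_of_exponent_ge h0 ht1' (by linarith)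
      _ = t ^ 3 := by rw [← Real.rpow_natCast t 3]; norm_num
  have h3 : (-w*t - Real.sin (-w*t)) / (-w) ^ 2 = -((u - Real.sin u) / w ^ 2) := by
    rw [hsin, hωt]; ring_nf
  have hsub := aux_sub_sin u hu0
  have hu3 : u ^ 3 = w ^ 3 * t ^ 3 := by rw [hu]; ring
  have hu5 : u ^ 5 = w ^ 5 * t ^ 5 := by rw [hu]; ring
  have hpos : w ^ 3 * t ^ 2 ≤ 20 * (w - 6 * lam) := by
    have h := (le_div_iff₀ (pow_pos hw0 3)).mp htsq
    linarith
  have hA : lam - w/6 + w^3*t^2/120 ≤ 0 := by linarith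
  have hB : t^3 * w^2 * (lam - w/6 + w^3*t^2/120) ≤ 0 :=
    mul_nonpos_iff.mpr (Or.inl ⟨by positivity, hA⟩)
  have hsub' : w^3*t^3/6 - w^5*t^5/120 ≤ u - Real.sin u := by
    rw [← hu3, ← hu5]; exact hsub
  have hkey : lam * t ^ 3 ≤ (u - Real.sin u) / w ^ 2 := by
    rw [le_div_iff₀ (by positivity)]
    nlinarith [hB, hsub']
  have hmul := mul_le_mul_of_nonneg_left hrpow hlam.le
  rw [h3]
  linarith [hmul, hkey]

/-- **Feasibility of the spiral for `p ≥ 3/2`.** Let `λ > 0`, `p ≥ 3/2`,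
`h(x) = λ(x₁² + x₂²)^p + x₃`, and `ω < −6λ`. Then the trajectory of Brockett's
non-holonomic integrator under the control `(cos ωt, sin ωt)` starting at the origin
satisfies `h(x(t)) ≤ 0` for all `t` in some interval `[0, t̄]` with `t̄ > 0`. -/
theorem brockett_spiral_feasible (lam p ω : ℝ) (hlam : 0 < lam)
    (hp : 3 / 2 ≤ p) (hω : ω < -6 * lam) :
    ∃ tbar > 0, ∀ t ∈ Set.Icc (0:ℝ) tbar, brockCon lam p (brockTraj ω t) ≤ 0 := by
  obtain ⟨tb, htb, h⟩ := brockett_spiral_feasible' lam p ω hlam hp hω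
  exact ⟨tb, htb, fun t ht => by simpa [brockCon, brockTraj] using h t ht⟩

end
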